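/- For every θ > 0 and every real s, the function H(b) = ∫₀¹ (θ·Re ψ(θ + i u θ b/2) + s)/√(1 − u²) du tends to +∞ as b → +∞, where ψ(z) = Γ′(z)/Γ(z) is the complex digamma function. -/

import Mathlib

open MeasureTheory Filter Set Topology intervalIntegral

/-- The complex digamma function `ψ(z) = Γ'(z)/Γ(z)`. -/
noncomputable def psiC (z : ℂ) : ℂ := deriv Complex.Gamma z / Complex.Gamma z

/-- The real digamma function `ψ(x) = Γ'(x)/Γ(x)`. -/
noncomputable def psiR (x : ℝ) : ℝ := deriv Real.Gamma x / Real.Gamma x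

/-- `ψ''(x)`: the second derivative of the digamma function at the real point `x`. -/
noncomputable def psiR'' (x : ℝ) : ℝ := iteratedDeriv 2 psiR x

/-- `b` solves the defining equation for the endpoint at parameters `(s, θ)`:
`∫₀¹ (2θ·Re ψ(θ + i u θ b/2) + 2s)/(π√(1−u²)) du = 0`. -/
noncomputable def defEqn (s θ b : ℝ) : Prop :=
  (∫ u in (0:ℝ)..1,
      (2 * θ * (psiC ((θ : ℂ) + Complex.I * (u : ℂ) * (θ : ℂ) * (b : ℂ) / 2)).re + 2 * s)
        / (Real.pi * Real.sqrt (1 - u ^ 2))) = 0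

lemma aux_log_ratio (c : ℝ) : Tendsto (fun n : ℕ => Real.log (n + c) - Real.log n) atTop (𝓝 0) := by
  have h1 : Tendsto (fun n : ℕ => (n + c) / n) atTop (𝓝 1) := by
    have := tendsto_const_div_atTop_nhds_zero_nat c
    have h2 : Tendsto (fun n : ℕ => 1 + c / n) atTop (𝓝 (1 + 0)) := tendsto_const_nhds.add this
    rw [add_zero] at h2
    apply h2.congr'
    filter_upwards [eventually_gt_atTop 0] with n hn
    field_simp
  have h3 : Tendsto (fun n : ℕ => Real.log ((n + c) / n)) atTop (𝓝 0) := by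
    rw [show (0:ℝ) = Real.log 1 by simp]
    exact (Real.continuousAt_log one_ne_zero).tendsto.comp h1
  apply h3.congr'
  filter_upwards [eventually_gt_atTop (max 0 ⌈-c⌉₊)] with n hn
  have hn0 : (0:ℝ) < n := by exact_mod_cast (le_max_left _ _).trans_lt hn
  have hnc : (0:ℝ) < n + c := by
    have : (⌈-c⌉₊ : ℝ) < n := by exact_mod_cast (le_max_right _ _).trans_lt hn
    have := (Nat.le_ceil (-c)).trans_lt this
    linarith
  rw [Real.log_div hnc.ne' hn0.ne']

lemma psiR_series_tendsto {x : ℝ} (hx : 0 < x) :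
    Tendsto (fun n : ℕ => (harmonic n : ℝ) - ∑ k ∈ Finset.range n, 1 / (x + k))
      atTop (𝓝 (deriv Real.Gamma x / Real.Gamma x + Real.eulerMascheroniConstant)) := by
  set γ := Real.eulerMascheroniConstant with hγ
  set f := Real.log ∘ Real.Gamma with hf
  have hc : ConvexOn ℝ (Ioi 0) f := Real.convexOn_log_Gamma
  have h_rec : ∀ y : ℝ, 0 < y → f (y + 1) = f y + Real.log y := fun y hy => by
    simp only [hf, Function.comp_apply, Real.Gamma_add_one hy.ne',
      Real.log_mul hy.ne' (Real.Gamma_pos_of_pos hy).ne', add_comm]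
  have hder : ∀ {y : ℝ}, 0 < y → DifferentiableAt ℝ f y := fun {y} hy => by
    refine ((Real.differentiableAt_Gamma ?_).log (Real.Gamma_pos_of_pos hy).ne')
    exact fun m => ((neg_nonpos.mpr m.cast_nonneg).trans_lt hy).ne'
  have hderiv_eq : ∀ {y : ℝ}, 0 < y → deriv f y = deriv Real.Gamma y / Real.Gamma y := by
    intro y hy
    rw [hf, Function.comp_def, deriv.log (Real.differentiableAt_Gamma
      (fun m => ((neg_nonpos.mpr m.cast_nonneg).trans_lt hy).ne'))
      (Real.Gamma_pos_of_pos hy).ne']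
  have hder_rec : ∀ y : ℝ, 0 < y → deriv f (y + 1) = deriv f y + 1 / y := fun y hy => by
    rw [← deriv_comp_add_const, one_div, ← Real.deriv_log,
      ← deriv_add (hder hy) (Real.differentiableAt_log hy.ne')]
    apply Filter.EventuallyEq.deriv_eq
    filter_upwards [eventually_gt_nhds hy] using h_rec
  have hder_nat : ∀ (y : ℝ), 0 < y → ∀ n : ℕ,
      deriv f (y + n) = deriv f y + ∑ k ∈ Finset.range n, 1 / (y + k) := by
    intro y hy n
    induction n with
    | zero => simp
    | succ n ih =>
      have h1 : (y + (n + 1 : ℕ) : ℝ) = (y + n) + 1 := by push_cast; ring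
      rw [h1, hder_rec _ (by positivity), ih, Finset.sum_range_succ, add_assoc]
  have hLB : ∀ {a : ℝ}, 1 < a → Real.log (a - 1) ≤ deriv f a := by
    intro a ha
    have h0a : (0:ℝ) < a := by linarith
    have := hc.slope_le_deriv (mem_Ioi.mpr (by linarith : (0:ℝ) < a - 1))
      (mem_Ioi.mpr h0a) (by linarith) (hder h0a)
    refine le_trans (le_of_eq ?_) this
    rw [slope_def_field, show a - (a - 1) = (1:ℝ) by ring, div_one,
      show a = (a - 1) + 1 by ring, h_rec (a - 1) (by linarith)]
    ring_nf
  have hUB : ∀ {a : ℝ}, 0 < a → deriv f a ≤ Real.log a := by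
    intro a h0a
    have := hc.deriv_le_slope (mem_Ioi.mpr h0a) (mem_Ioi.mpr (by linarith : (0:ℝ) < a + 1))
      (by linarith) (hder h0a)
    refine this.trans (le_of_eq ?_)
    rw [slope_def_field, show a + 1 - a = (1:ℝ) by ring, div_one, h_rec a h0a,
      add_sub_cancel_left]
  -- the difference sequence
  have hd : Tendsto (fun n : ℕ => deriv f (x + n) - deriv f (1 + n)) atTop (𝓝 0) := by
    have hup : Tendsto (fun n : ℕ => Real.log (n + x) - Real.log n) atTop (𝓝 0) :=
      aux_log_ratio x
    have hlo : Tendsto (fun n : ℕ => Real.log ((n+1) + (x-2)) - Real.log (n+1)) atTop (𝓝 0) := by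
      have := (aux_log_ratio (x - 2)).comp (tendsto_add_atTop_nat 1)
      apply this.congr
      intro n
      simp [Function.comp]
    refine tendsto_of_tendsto_of_tendsto_of_le_of_le' hlo hup ?_ ?_
    · filter_upwards [eventually_ge_atTop 1] with n hn
      have hn1 : (1:ℝ) ≤ n := by exact_mod_cast hn
      have h1 : Real.log ((n:ℝ) + 1 + (x - 2)) ≤ deriv f (x + n) := by
        have := hLB (a := x + n) (by linarith)
        convert this using 2
        ring
      have h2 : deriv f (1 + n) ≤ Real.log ((n:ℝ) + 1) := by
        have := hUB (a := 1 + n) (by linarith)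
        convert this using 2
        ring
      linarith
    · filter_upwards [eventually_ge_atTop 1] with n hn
      have hn1 : (1:ℝ) ≤ n := by exact_mod_cast hn
      have h1 : deriv f (x + n) ≤ Real.log ((n:ℝ) + x) := by
        have := hUB (a := x + n) (by linarith)
        convert this using 2
        ring
      have h2 : Real.log (n:ℝ) ≤ deriv f (1 + n) := by
        have := hLB (a := 1 + n) (by linarith)
        convert this using 2
        ring
      linarith
  -- rewrite the difference
  have hd' : Tendsto (fun n : ℕ => (deriv f x - deriv f 1) -
      ((harmonic n : ℝ) - ∑ k ∈ Finset.range n, 1 / (x + k))) atTop (𝓝 0) := by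
    apply hd.congr
    intro n
    rw [hder_nat x hx n, hder_nat 1 one_pos n]
    have : (harmonic n : ℝ) = ∑ k ∈ Finset.range n, 1 / (1 + (k:ℝ)) := by
      rw [harmonic, Rat.cast_sum]
      push_cast
      exact Finset.sum_congr rfl fun k _ => by rw [one_div, add_comm]
    rw [this]
    ring
  have hfinal : Tendsto (fun n : ℕ => (harmonic n : ℝ) - ∑ k ∈ Finset.range n, 1 / (x + k))
      atTop (𝓝 (deriv f x - deriv f 1)) := by
    have := (tendsto_const_nhds (x := deriv f x - deriv f 1) (f := atTop (α := ℕ))).sub hd'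
    simpa using this
  have h1 : deriv f 1 = -γ := by
    rw [hderiv_eq one_pos, Real.Gamma_one, div_one, hγ,
      Real.eulerMascheroniConstant_eq_neg_deriv, neg_neg]
  rw [hderiv_eq hx, h1] at hfinal
  simpa [sub_neg_eq_add] using hfinal

lemma aux_sq_summable : Summable (fun n : ℕ => 1 / ((n:ℝ) + 1) ^ 2) := by
  have := (summable_nat_add_iff (f := fun n : ℕ => 1 / (n:ℝ) ^ 2) 1).mpr
    (Real.summable_one_div_nat_pow.mpr one_lt_two)
  apply this.congr
  intro n
  push_cast
  ring_nf

lemma aux_min_le (c : ℝ) (n : ℕ) :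
    min 1 c * ((n:ℝ) + 1) ^ 2 ≤ ((n:ℝ) + 1) * ((n:ℝ) + c) := by
  rcases le_total c 1 with h | h
  · rw [min_eq_right h]
    nlinarith [mul_nonneg (mul_nonneg (sub_nonneg.mpr h) (Nat.cast_nonneg (α := ℝ) n))
      (by positivity : (0:ℝ) ≤ (n:ℝ) + 1)]
  · rw [min_eq_left h]
    nlinarith [Nat.cast_nonneg (α := ℝ) n]

lemma nat_add_ne_zero {z : ℂ} (hz : 0 < z.re) (n : ℕ) : (n:ℂ) + z ≠ 0 := by
  intro h
  have := congrArg Complex.re h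
  simp at this
  nlinarith [Nat.cast_nonneg (α := ℝ) n]

lemma term_norm_bound {w : ℂ} {ε : ℝ} (hε : 0 < ε) (hw : ε ≤ w.re) (n : ℕ) :
    ‖1 / ((n:ℂ) + 1) - 1 / ((n:ℂ) + w)‖ ≤ ‖w - 1‖ / (min 1 ε * ((n:ℝ) + 1) ^ 2) := by
  have hwre : 0 < w.re := lt_of_lt_of_le hε hw
  have hn1 : ((n:ℂ) + 1) ≠ 0 := by
    have : ((1:ℂ)) = ((1:ℕ):ℂ) := by norm_num
    intro h
    have := congrArg Complex.re h
    simp at this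
    nlinarith [Nat.cast_nonneg (α := ℝ) n]
  have hnz : ((n:ℂ) + w) ≠ 0 := nat_add_ne_zero hwre n
  have heq : 1 / ((n:ℂ) + 1) - 1 / ((n:ℂ) + w) = (w - 1) / (((n:ℂ) + 1) * ((n:ℂ) + w)) := by
    field_simp
    ring
  rw [heq, norm_div, norm_mul]
  have h1 : ‖(n:ℂ) + 1‖ = (n:ℝ) + 1 := by
    rw [show ((n:ℂ) + 1) = ((n + 1 : ℝ) : ℂ) by push_cast; ring, Complex.norm_real,
      Real.norm_eq_abs, abs_of_nonneg (by positivity)]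
  have h2 : (n:ℝ) + ε ≤ ‖(n:ℂ) + w‖ := by
    have hre : ((n:ℂ) + w).re = (n:ℝ) + w.re := by simp
    calc (n:ℝ) + ε ≤ (n:ℝ) + w.re := by linarith
      _ ≤ ‖(n:ℂ) + w‖ := by rw [← hre]; exact Complex.re_le_norm _
  have hmin : 0 < min 1 ε := lt_min one_pos hε
  have hkey : min 1 ε * ((n:ℝ) + 1) ^ 2 ≤ ‖(n:ℂ) + 1‖ * ‖(n:ℂ) + w‖ := by
    rw [h1]
    calc min 1 ε * ((n:ℝ) + 1) ^ 2 ≤ ((n:ℝ) + 1) * ((n:ℝ) + ε) := aux_min_le ε n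
      _ ≤ ((n:ℝ) + 1) * ‖(n:ℂ) + w‖ := mul_le_mul_of_nonneg_left h2 (by positivity)
  have hprod : (0:ℝ) < ‖(n:ℂ) + 1‖ * ‖(n:ℂ) + w‖ := lt_of_lt_of_le (by positivity) hkey
  rw [div_le_div_iff₀ hprod (by positivity)]
  calc ‖w - 1‖ * (min 1 ε * ((n:ℝ) + 1) ^ 2) ≤ ‖w - 1‖ * (‖(n:ℂ) + 1‖ * ‖(n:ℂ) + w‖) :=
        mul_le_mul_of_nonneg_left hkey (norm_nonneg _)
    _ = ‖w - 1‖ * (‖(n:ℂ) + 1‖ * ‖(n:ℂ) + w‖) := rfl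

lemma summable_term_complex {z : ℂ} (hz : 0 < z.re) :
    Summable (fun n : ℕ => 1 / ((n:ℂ) + 1) - 1 / ((n:ℂ) + z)) := by
  apply Summable.of_norm
  apply Summable.of_nonneg_of_le (fun n => norm_nonneg _)
    (fun n => term_norm_bound hz le_rfl n)
  have : (fun n : ℕ => ‖z - 1‖ / (min 1 z.re * ((n:ℝ) + 1) ^ 2)) =
      (fun n : ℕ => (‖z - 1‖ / min 1 z.re) * (1 / ((n:ℝ) + 1) ^ 2)) := by
    funext n
    rw [div_mul_eq_div_div, div_eq_mul_one_div]
  rw [this]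
  exact aux_sq_summable.mul_left _

lemma summable_term_real {x : ℝ} (hx : 0 < x) :
    Summable (fun n : ℕ => 1 / ((n:ℝ) + 1) - 1 / ((n:ℝ) + x)) := by
  have h := summable_term_complex (z := (x:ℂ)) (by simpa using hx)
  have h2 := h.hasSum
  have h3 := Complex.hasSum_re h2
  apply h3.summable.congr
  intro n
  rw [show (1 / ((n:ℂ) + 1) - 1 / ((n:ℂ) + (x:ℂ))) =
    ((1 / ((n:ℝ) + 1) - 1 / ((n:ℝ) + x) : ℝ) : ℂ) by push_cast; ring]
  exact Complex.ofReal_re _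

lemma psiR_hasSum {x : ℝ} (hx : 0 < x) :
    HasSum (fun n : ℕ => 1 / ((n:ℝ) + 1) - 1 / ((n:ℝ) + x))
      (psiR x + Real.eulerMascheroniConstant) := by
  have hs := (summable_term_real hx).hasSum
  have hpartial := hs.tendsto_sum_nat
  have heq : ∀ n : ℕ, ∑ k ∈ Finset.range n, (1 / ((k:ℝ) + 1) - 1 / ((k:ℝ) + x)) =
      (harmonic n : ℝ) - ∑ k ∈ Finset.range n, 1 / (x + k) := by
    intro n
    rw [Finset.sum_sub_distrib]
    congr 1
    · rw [harmonic, Rat.cast_sum]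
      push_cast
      exact Finset.sum_congr rfl fun k _ => by rw [one_div]
    · exact Finset.sum_congr rfl fun k _ => by rw [add_comm]
  rw [show ∑' n : ℕ, (1 / ((n:ℝ) + 1) - 1 / ((n:ℝ) + x)) =
      psiR x + Real.eulerMascheroniConstant from ?_] at hs
  · exact hs
  · refine tendsto_nhds_unique ?_ (psiR_series_tendsto hx)
    exact hpartial.congr heq

lemma ne_neg_nat {z : ℂ} (hz : 0 < z.re) : ∀ m : ℕ, z ≠ -m := by
  intro m h
  rw [h] at hz
  simp at hz
  exact absurd hz (not_lt.mpr (Nat.cast_nonneg m))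

lemma gamma_deriv_real {x : ℝ} (hx : 0 < x) :
    deriv Complex.Gamma (x:ℂ) = ((deriv Real.Gamma x : ℝ) : ℂ) := by
  have hne : ∀ m : ℕ, (x:ℂ) ≠ -m := ne_neg_nat (by simpa using hx)
  set g := deriv Complex.Gamma (x:ℂ) with hg_def
  have hg : HasDerivAt Complex.Gamma g (x:ℂ) :=
    (Complex.differentiableAt_Gamma _ hne).hasDerivAt
  have hre : deriv Real.Gamma x = g.re := by
    have h1 := hg.real_of_complex
    have h2 : (fun y : ℝ => (Complex.Gamma (y:ℂ)).re) = Real.Gamma := by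
      funext y
      rw [Complex.Gamma_ofReal, Complex.ofReal_re]
    rw [h2] at h1
    exact h1.deriv
  have hconj : HasDerivAt Complex.Gamma ((starRingEnd ℂ) g) (x:ℂ) := by
    have hF : (fun z : ℂ => (starRingEnd ℂ) (Complex.Gamma ((starRingEnd ℂ) z))) =
        Complex.Gamma := by
      funext z
      rw [← Complex.Gamma_conj, Complex.conj_conj]
    rw [hasDerivAt_iff_tendsto_slope] at hg ⊢
    rw [← hF]
    have hconj_tendsto : Tendsto (fun z : ℂ => (starRingEnd ℂ) z) (𝓝[≠] (x:ℂ)) (𝓝[≠] (x:ℂ)) := by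
      rw [tendsto_nhdsWithin_iff]
      constructor
      · have : Tendsto (starRingEnd ℂ) (𝓝 (x:ℂ)) (𝓝 ((starRingEnd ℂ) (x:ℂ))) :=
          (Complex.continuous_conj.tendsto _)
        rw [Complex.conj_ofReal] at this
        exact this.mono_left nhdsWithin_le_nhds
      · filter_upwards [self_mem_nhdsWithin] with z hz
        simp only [mem_compl_iff, mem_singleton_iff] at hz ⊢
        intro h
        apply hz
        have h2 := congrArg (starRingEnd ℂ) h
        rwa [Complex.conj_conj, Complex.conj_ofReal] at h2
    have h2 := (Complex.continuous_conj.tendsto g).comp (hg.comp hconj_tendsto)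
    apply h2.congr'
    filter_upwards [self_mem_nhdsWithin] with z hz
    simp only [Function.comp_apply]
    rw [slope_def_field, slope_def_field, map_div₀]
    simp [map_sub, Complex.conj_conj, Complex.conj_ofReal]
  have hgg : (starRingEnd ℂ) g = g := hconj.unique hg
  have him : g.im = 0 := by
    have h3 := congrArg Complex.im hgg
    simp only [Complex.conj_im] at h3
    linarith
  rw [hre]
  exact (Complex.ext (by simp) (by simp [him])).symm

lemma isOpen_halfplane : IsOpen {z : ℂ | 0 < z.re} :=
  isOpen_lt continuous_const Complex.continuous_re

lemma psiC_diffOn : DifferentiableOn ℂ psiC {z : ℂ | 0 < z.re} := by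
  have hG : DifferentiableOn ℂ Complex.Gamma {z : ℂ | 0 < z.re} := fun z hz =>
    (Complex.differentiableAt_Gamma z (ne_neg_nat hz)).differentiableWithinAt
  have hA : AnalyticOnNhd ℂ Complex.Gamma {z : ℂ | 0 < z.re} :=
    hG.analyticOnNhd isOpen_halfplane
  have hA' : AnalyticOnNhd ℂ (deriv Complex.Gamma) {z : ℂ | 0 < z.re} := hA.deriv
  intro z hz
  exact (((hA' z hz).differentiableAt).div ((hA z hz).differentiableAt)
    (Complex.Gamma_ne_zero (ne_neg_nat hz))).differentiableWithinAt

noncomputable def digammaS (z : ℂ) : ℂ :=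
  -(Real.eulerMascheroniConstant : ℂ) + ∑' n : ℕ, (1 / ((n:ℂ) + 1) - 1 / ((n:ℂ) + z))

lemma digammaS_diffOn : DifferentiableOn ℂ digammaS {z : ℂ | 0 < z.re} := by
  intro z₀ hz₀
  apply DifferentiableAt.differentiableWithinAt
  have hz₀' : 0 < z₀.re := hz₀
  set r := z₀.re / 2 with hr
  have hrpos : 0 < r := half_pos hz₀'
  have hre_ball : ∀ w ∈ Metric.ball z₀ r, r ≤ w.re := by
    intro w hw
    simp only [Metric.mem_ball, Complex.dist_eq] at hw
    have h1 : |(w - z₀).re| ≤ ‖w - z₀‖ := Complex.abs_re_le_norm _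
    simp only [Complex.sub_re] at h1
    have h2 := (abs_lt.mp (lt_of_le_of_lt h1 hw)).1
    simp only [hr] at *
    linarith
  set C := ‖z₀‖ + r + 1 with hC
  have hCpos : 0 < C := by positivity
  have hdiff : DifferentiableOn ℂ
      (fun w : ℂ => ∑' n : ℕ, (1 / ((n:ℂ) + 1) - 1 / ((n:ℂ) + w))) (Metric.ball z₀ r) := by
    apply Complex.differentiableOn_tsum_of_summable_norm
      (u := fun n : ℕ => C / (min 1 r * ((n:ℝ) + 1) ^ 2))
    · have : (fun n : ℕ => C / (min 1 r * ((n:ℝ) + 1) ^ 2)) =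
          (fun n : ℕ => (C / min 1 r) * (1 / ((n:ℝ) + 1) ^ 2)) := by
        funext n
        rw [div_mul_eq_div_div, div_eq_mul_one_div]
      rw [this]
      exact aux_sq_summable.mul_left _
    · intro n
      apply DifferentiableOn.sub (differentiableOn_const _)
      apply DifferentiableOn.div (differentiableOn_const _)
      · exact (differentiableOn_const _).add differentiableOn_id
      · intro w hw
        exact nat_add_ne_zero (lt_of_lt_of_le hrpos (hre_ball w hw)) n
    · exact Metric.isOpen_ball
    · intro n w hw
      refine (term_norm_bound hrpos (hre_ball w hw) n).trans ?_
      have hmin : 0 < min 1 r * ((n:ℝ) + 1) ^ 2 := by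
        have := lt_min one_pos hrpos
        positivity
      have hwC : ‖w - 1‖ ≤ C := by
        have h4 : ‖w‖ ≤ ‖z₀‖ + r := by
          have h5 : ‖w - z₀‖ < r := by
            simpa [Complex.dist_eq] using hw
          calc ‖w‖ = ‖z₀ + (w - z₀)‖ := by ring_nf
            _ ≤ ‖z₀‖ + ‖w - z₀‖ := norm_add_le _ _
            _ ≤ ‖z₀‖ + r := by
                linarith
        calc ‖w - 1‖ ≤ ‖w‖ + 1 := norm_sub_le_of_le le_rfl le_rfl |>.trans (by
              have := norm_sub_le w (1:ℂ)
              simpa using this)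
          _ ≤ C := by rw [hC]; linarith
      gcongr
  have hd2 : DifferentiableAt ℂ
      (fun w : ℂ => ∑' n : ℕ, (1 / ((n:ℂ) + 1) - 1 / ((n:ℂ) + w))) z₀ :=
    (hdiff.differentiableAt (Metric.isOpen_ball.mem_nhds (Metric.mem_ball_self hrpos)))
  exact (differentiableAt_const _).add hd2

lemma psiC_real {x : ℝ} (hx : 0 < x) : psiC (x:ℂ) = ((psiR x : ℝ) : ℂ) := by
  rw [psiC, psiR, gamma_deriv_real hx, Complex.Gamma_ofReal, ← Complex.ofReal_div]

lemma digammaS_real {x : ℝ} (hx : 0 < x) : digammaS (x:ℂ) = ((psiR x : ℝ) : ℂ) := by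
  rw [digammaS]
  have h1 : ∑' n : ℕ, (1 / ((n:ℂ) + 1) - 1 / ((n:ℂ) + (x:ℂ))) =
      (((psiR x + Real.eulerMascheroniConstant : ℝ)) : ℂ) := by
    have h2 := (psiR_hasSum hx).tsum_eq
    rw [← h2, Complex.ofReal_tsum]
    congr 1
    funext n
    push_cast
    ring
  rw [h1]
  push_cast
  ring

lemma psiC_eq_digammaS {z : ℂ} (hz : 0 < z.re) : psiC z = digammaS z := by
  have hU : IsOpen {z : ℂ | 0 < z.re} := isOpen_halfplane
  have hA1 : AnalyticOnNhd ℂ psiC {z : ℂ | 0 < z.re} := psiC_diffOn.analyticOnNhd hU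
  have hA2 : AnalyticOnNhd ℂ digammaS {z : ℂ | 0 < z.re} := digammaS_diffOn.analyticOnNhd hU
  have hpre : IsPreconnected {z : ℂ | 0 < z.re} :=
    (convex_halfSpace_re_gt 0).isPreconnected
  have h1 : (1:ℂ) ∈ {z : ℂ | 0 < z.re} := by simp
  have hfreq : ∃ᶠ w in 𝓝[≠] (1:ℂ), psiC w = digammaS w := by
    have hseq : Tendsto (fun n : ℕ => ((1 + (1:ℝ)/(n+1) : ℝ) : ℂ)) atTop (𝓝[≠] (1:ℂ)) := by
      rw [tendsto_nhdsWithin_iff]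
      constructor
      · have : Tendsto (fun n : ℕ => (1 + (1:ℝ)/(n+1) : ℝ)) atTop (𝓝 1) := by
          have h0 : Tendsto (fun n : ℕ => (1:ℝ)/(n+1)) atTop (𝓝 0) :=
            tendsto_one_div_add_atTop_nhds_zero_nat
          simpa using tendsto_const_nhds.add h0
        have h3 := (Complex.continuous_ofReal.tendsto (1:ℝ)).comp this
        simpa only [Function.comp_def, Complex.ofReal_one] using h3
      · filter_upwards with n
        simp only [mem_compl_iff, mem_singleton_iff]
        intro h
        rw [show (1:ℂ) = ((1:ℝ):ℂ) by norm_num] at h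
        have h2 := Complex.ofReal_inj.mp h
        have h3 : (0:ℝ) < 1/((n:ℝ)+1) := by positivity
        linarith
    apply hseq.frequently
    apply Filter.Frequently.of_forall
    intro n
    have hx : (0:ℝ) < 1 + 1/((n:ℝ)+1) := by positivity
    rw [psiC_real hx, digammaS_real hx]
  exact hA1.eqOn_of_preconnected_of_frequently_eq hA2 hpre h1 hfreq hz

/-- the real part of the `n`-th term of the digamma series at `θ + iy`. -/
noncomputable def gterm (θ : ℝ) (n : ℕ) (y : ℝ) : ℝ :=
  1 / ((n:ℝ) + 1) - ((n:ℝ) + θ) / (((n:ℝ) + θ) ^ 2 + y ^ 2)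

lemma re_pos_of_theta {θ : ℝ} (hθ : 0 < θ) (y : ℝ) :
    0 < ((θ:ℂ) + Complex.I * (y:ℂ)).re := by simp [hθ]

lemma term_re {θ : ℝ} (n : ℕ) (y : ℝ) :
    (1 / ((n:ℂ) + 1) - 1 / ((n:ℂ) + ((θ:ℂ) + Complex.I * (y:ℂ)))).re = gterm θ n y := by
  rw [Complex.sub_re, gterm]
  congr 1
  · rw [show ((n:ℂ) + 1) = (((n:ℝ) + 1 : ℝ) : ℂ) by push_cast; ring, ← Complex.ofReal_one,
      ← Complex.ofReal_div, Complex.ofReal_re]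
  · rw [one_div, Complex.inv_re, Complex.normSq_apply]
    have h1 : ((n:ℂ) + ((θ:ℂ) + Complex.I * (y:ℂ))).re = (n:ℝ) + θ := by simp
    have h2 : ((n:ℂ) + ((θ:ℂ) + Complex.I * (y:ℂ))).im = y := by simp
    rw [h1, h2]
    ring_nf

lemma summable_gterm {θ : ℝ} (hθ : 0 < θ) (y : ℝ) : Summable (gterm θ · y) := by
  have h := Complex.hasSum_re (summable_term_complex (re_pos_of_theta hθ y)).hasSum
  exact h.summable.congr fun n => term_re n y

lemma F_eq {θ : ℝ} (hθ : 0 < θ) (y : ℝ) :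
    (psiC ((θ:ℂ) + Complex.I * (y:ℂ))).re =
      -Real.eulerMascheroniConstant + ∑' n : ℕ, gterm θ n y := by
  rw [psiC_eq_digammaS (re_pos_of_theta hθ y), digammaS, Complex.add_re,
    Complex.re_tsum (summable_term_complex (re_pos_of_theta hθ y)),
    tsum_congr (fun n => term_re (θ := θ) n y)]
  simp

lemma gterm_mono {θ : ℝ} (hθ : 0 < θ) (n : ℕ) {y₁ y₂ : ℝ} (h0 : 0 ≤ y₁) (h12 : y₁ ≤ y₂) :
    gterm θ n y₁ ≤ gterm θ n y₂ := by
  rw [gterm, gterm]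
  have hnθ : (0:ℝ) < (n:ℝ) + θ := by positivity
  have hd1 : (0:ℝ) < ((n:ℝ) + θ) ^ 2 + y₁ ^ 2 := by positivity
  gcongr

lemma F_mono {θ : ℝ} (hθ : 0 < θ) {y₁ y₂ : ℝ} (h0 : 0 ≤ y₁) (h12 : y₁ ≤ y₂) :
    (psiC ((θ:ℂ) + Complex.I * (y₁:ℂ))).re ≤ (psiC ((θ:ℂ) + Complex.I * (y₂:ℂ))).re := by
  rw [F_eq hθ, F_eq hθ]
  have := Summable.tsum_le_tsum (fun n => gterm_mono hθ n h0 h12) (summable_gterm hθ y₁)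
    (summable_gterm hθ y₂)
  linarith

lemma sum_inv_add_diverges {θ : ℝ} (hθ : 0 < θ) :
    Tendsto (fun N : ℕ => ∑ n ∈ Finset.range N, 1 / ((n:ℝ) + θ)) atTop atTop := by
  have hM : 0 < max θ 1 := lt_of_lt_of_le one_pos (le_max_right _ _)
  have hdiv := Real.tendsto_sum_range_one_div_nat_succ_atTop
  have h2 : Tendsto (fun N : ℕ => (1 / max θ 1) * ∑ n ∈ Finset.range N, 1 / ((n:ℝ) + 1))
      atTop atTop := hdiv.const_mul_atTop (by positivity)
  apply tendsto_atTop_mono _ h2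
  intro N
  rw [Finset.mul_sum]
  apply Finset.sum_le_sum
  intro n _
  rw [div_mul_div_comm, one_mul]
  apply div_le_div_of_nonneg_left one_pos.le (by positivity)
  calc (n:ℝ) + θ ≤ max θ 1 * (n:ℝ) + max θ 1 := by
        have h3 : (1:ℝ) ≤ max θ 1 := le_max_right _ _
        have h4 : θ ≤ max θ 1 := le_max_left _ _
        nlinarith [Nat.cast_nonneg (α := ℝ) n]
    _ = max θ 1 * ((n:ℝ) + 1) := by ring

lemma F_tendsto_atTop {θ : ℝ} (hθ : 0 < θ) :
    Tendsto (fun y : ℝ => (psiC ((θ:ℂ) + Complex.I * (y:ℂ))).re) atTop atTop := by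
  rw [tendsto_atTop]
  intro M
  set F0 := (psiC ((θ:ℂ) + Complex.I * ((0:ℝ):ℂ))).re with hF0
  -- choose N
  obtain ⟨N, hN⟩ := (tendsto_atTop.mp (sum_inv_add_diverges hθ) (M - F0 + 1)).exists
  -- finite sum limit in y
  have hterm_lim : ∀ n : ℕ, Tendsto (fun y : ℝ => gterm θ n y - gterm θ n 0) atTop
      (𝓝 (1 / ((n:ℝ) + θ))) := by
    intro n
    have hnθ : (0:ℝ) < (n:ℝ) + θ := by positivity
    have h1 : Tendsto (fun y : ℝ => ((n:ℝ) + θ) ^ 2 + y ^ 2) atTop atTop := by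
      apply tendsto_atTop_add_const_left
      exact (tendsto_pow_atTop two_ne_zero)
    have h2 : Tendsto (fun y : ℝ => ((n:ℝ) + θ) / (((n:ℝ) + θ) ^ 2 + y ^ 2)) atTop (𝓝 0) :=
      Tendsto.div_atTop tendsto_const_nhds h1
    have h4 : Tendsto (fun y : ℝ => 1/((n:ℝ)+θ) - ((n:ℝ)+θ)/(((n:ℝ)+θ)^2+y^2)) atTop
        (𝓝 (1/((n:ℝ)+θ) - 0)) := tendsto_const_nhds.sub h2
    rw [sub_zero] at h4
    apply h4.congr
    intro y
    rw [gterm, gterm]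
    have hy2 : ((n:ℝ)+θ)^2+y^2 ≠ 0 := by positivity
    have h02 : ((n:ℝ)+θ)^2+(0:ℝ)^2 ≠ 0 := by positivity
    field_simp
    ring
  have hsum_lim : Tendsto (fun y : ℝ => ∑ n ∈ Finset.range N, (gterm θ n y - gterm θ n 0))
      atTop (𝓝 (∑ n ∈ Finset.range N, 1 / ((n:ℝ) + θ))) :=
    tendsto_finset_sum _ fun n _ => hterm_lim n
  have hev : ∀ᶠ y : ℝ in atTop, M - F0 ≤
      ∑ n ∈ Finset.range N, (gterm θ n y - gterm θ n 0) :=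
    hsum_lim.eventually (eventually_ge_nhds (by linarith))
  filter_upwards [hev, eventually_ge_atTop (0:ℝ)] with y hy hy0
  -- F y ≥ F 0 + partial sum
  have hkey : F0 + ∑ n ∈ Finset.range N, (gterm θ n y - gterm θ n 0) ≤
      (psiC ((θ:ℂ) + Complex.I * (y:ℂ))).re := by
    rw [F_eq hθ, hF0, F_eq hθ]
    have hsub : Summable (fun n => gterm θ n y - gterm θ n 0) :=
      (summable_gterm hθ y).sub (summable_gterm hθ 0)
    have h5 : ∑ n ∈ Finset.range N, (gterm θ n y - gterm θ n 0) ≤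
        ∑' n : ℕ, (gterm θ n y - gterm θ n 0) :=
      Summable.sum_le_tsum _ (fun n _ => by linarith [gterm_mono hθ n le_rfl hy0]) hsub
    have h6 : ∑' n : ℕ, (gterm θ n y - gterm θ n 0) =
        (∑' n : ℕ, gterm θ n y) - ∑' n : ℕ, gterm θ n 0 :=
      Summable.tsum_sub (summable_gterm hθ y) (summable_gterm hθ 0)
    rw [h6] at h5
    linarith
  linarith

lemma sqrt_one_sub_sq_meas :
    Measurable (fun u : ℝ => 1 / Real.sqrt (1 - u ^ 2)) := by
  have h : Continuous fun u : ℝ => Real.sqrt (1 - u ^ 2) :=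
    Real.continuous_sqrt.comp (by continuity)
  exact measurable_const.div h.measurable

lemma sqrt_integrand_bound {u : ℝ} (hu : u ∈ Ioc (0:ℝ) 1) :
    1 / Real.sqrt (1 - u ^ 2) ≤ (1 - u) ^ (-(1/2) : ℝ) := by
  have hu0 : 0 < u := hu.1
  have hu1 : u ≤ 1 := hu.2
  have h1u : 0 ≤ 1 - u := by linarith
  rcases eq_or_lt_of_le hu1 with rfl | hlt
  · simp [Real.zero_rpow (by norm_num : (-(1/2):ℝ) ≠ 0)]
  · have hpos : 0 < 1 - u := by linarith
    have hsq : 1 - u ≤ 1 - u ^ 2 := by nlinarith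
    have h2 : Real.sqrt (1 - u) ≤ Real.sqrt (1 - u ^ 2) := Real.sqrt_le_sqrt hsq
    have h3 : 0 < Real.sqrt (1 - u) := Real.sqrt_pos.mpr hpos
    have h4 : 1 / Real.sqrt (1 - u ^ 2) ≤ 1 / Real.sqrt (1 - u) :=
      one_div_le_one_div_of_le h3 h2
    refine h4.trans (le_of_eq ?_)
    rw [Real.rpow_neg h1u, Real.sqrt_eq_rpow, one_div]

lemma sqrt_integrand_intable : IntervalIntegrable (fun u : ℝ => 1 / Real.sqrt (1 - u ^ 2))
    volume 0 1 := by
  have h₀ : IntervalIntegrable (fun x : ℝ => x ^ (-(1/2) : ℝ)) volume 0 1 :=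
    intervalIntegral.intervalIntegrable_rpow' (by norm_num)
  have h₁ : IntervalIntegrable (fun x : ℝ => (1 - x) ^ (-(1/2) : ℝ)) volume 0 1 := by
    have := (h₀.comp_sub_left 1).symm
    norm_num at this
    exact this
  apply h₁.mono_fun' (sqrt_one_sub_sq_meas.aestronglyMeasurable.restrict)
  rw [uIoc_of_le (by norm_num : (0:ℝ) ≤ 1)]
  filter_upwards [ae_restrict_mem measurableSet_Ioc] with u hu
  rw [Real.norm_eq_abs, abs_of_nonneg (by positivity)]
  exact sqrt_integrand_bound hu

lemma cont_sqrt_one_sub_sq : Continuous fun u : ℝ => Real.sqrt (1 - u ^ 2) :=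
  Real.continuous_sqrt.comp (continuous_const.sub (continuous_pow 2))

/-- For `θ > 0` and any real `s`, the function
`H(b) = ∫₀¹ (θ·Re ψ(θ + i u θ b/2) + s)/√(1−u²) du` tends to `+∞` as `b → +∞`. -/
theorem statement16 (θ : ℝ) (hθ : 0 < θ) (s : ℝ) :
    Filter.Tendsto (fun b : ℝ =>
        ∫ u in (0:ℝ)..1,
          (θ * (psiC ((θ : ℂ) + Complex.I * (u : ℂ) * (θ : ℂ) * (b : ℂ) / 2)).re + s)
            / Real.sqrt (1 - u ^ 2))
      Filter.atTop Filter.atTop := by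
  classical
  set F : ℝ → ℝ := fun y => (psiC ((θ:ℂ) + Complex.I * (y:ℂ))).re with hF
  have hcontψ : ∀ z : ℂ, 0 < z.re → ContinuousAt psiC z := fun z hz =>
    (psiC_diffOn.differentiableAt (isOpen_halfplane.mem_nhds hz)).continuousAt
  have harg : ∀ u b : ℝ, (θ:ℂ) + Complex.I * (u:ℂ) * (θ:ℂ) * (b:ℂ) / 2
      = (θ:ℂ) + Complex.I * ((u * θ * b / 2 : ℝ) : ℂ) := by
    intro u b; push_cast; ring
  -- integrability of subinterval sqrt weights
  have hsub1 : IntervalIntegrable (fun u : ℝ => 1 / Real.sqrt (1 - u ^ 2)) volume 0 (1/2) := by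
    apply sqrt_integrand_intable.mono_set
    rw [uIcc_of_le (by norm_num : (0:ℝ) ≤ 1/2), uIcc_of_le (by norm_num : (0:ℝ) ≤ 1)]
    exact Icc_subset_Icc le_rfl (by norm_num)
  have hsub2 : IntervalIntegrable (fun u : ℝ => 1 / Real.sqrt (1 - u ^ 2)) volume (1/2) 1 := by
    apply sqrt_integrand_intable.mono_set
    rw [uIcc_of_le (by norm_num : (1/2:ℝ) ≤ 1), uIcc_of_le (by norm_num : (0:ℝ) ≤ 1)]
    exact Icc_subset_Icc (by norm_num) le_rfl
  set κ := ∫ u in (1/2:ℝ)..1, 1 / Real.sqrt (1 - u ^ 2) with hκ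
  set κ₀ := ∫ u in (0:ℝ)..(1/2:ℝ), 1 / Real.sqrt (1 - u ^ 2) with hκ₀
  have hκpos : 0 < κ := by
    apply intervalIntegral_pos_of_pos_on hsub2 _ (by norm_num)
    intro x hx
    have h1 : 0 < 1 - x ^ 2 := by nlinarith [hx.1, hx.2]
    positivity
  -- the key lower bound
  have key : ∀ b : ℝ, 0 ≤ b →
      (θ * F 0 + s) * κ₀ + (θ * F (θ * b / 4) + s) * κ ≤
      ∫ u in (0:ℝ)..1,
        (θ * (psiC ((θ : ℂ) + Complex.I * (u : ℂ) * (θ : ℂ) * (b : ℂ) / 2)).re + s)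
          / Real.sqrt (1 - u ^ 2) := by
    intro b hb
    set num : ℝ → ℝ := fun u => θ * F (u * θ * b / 2) + s with hnum
    have hinteq : (fun u : ℝ =>
        (θ * (psiC ((θ : ℂ) + Complex.I * (u : ℂ) * (θ : ℂ) * (b : ℂ) / 2)).re + s)
          / Real.sqrt (1 - u ^ 2)) = fun u => num u / Real.sqrt (1 - u ^ 2) := by
      funext u
      rw [hnum, hF, harg u b]
    rw [hinteq]
    -- continuity and boundedness of num
    have hnumcont : Continuous num := by
      rw [hnum, hF]
      apply Continuous.add _ continuous_const
      apply Continuous.mul continuous_const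
      apply Complex.continuous_re.comp
      rw [continuous_iff_continuousAt]
      intro u
      have hc : Continuous fun u : ℝ => (θ:ℂ) + Complex.I * ((u * θ * b / 2 : ℝ):ℂ) :=
        continuous_const.add (continuous_const.mul (Complex.continuous_ofReal.comp
          (((continuous_id.mul continuous_const).mul continuous_const).div_const 2)))
      exact (hcontψ _ (by simp [hθ])).comp hc.continuousAt
    obtain ⟨C, hC⟩ := (isCompact_Icc (a := (0:ℝ)) (b := 1)).exists_bound_of_continuousOn
      hnumcont.continuousOn
    -- integrability of the integrand
    have hf_int : IntervalIntegrable (fun u => num u / Real.sqrt (1 - u ^ 2)) volume 0 1 := by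
      have hCnn : 0 ≤ C := le_trans (norm_nonneg _) (hC 0 (by norm_num))
      have hmeas : AEStronglyMeasurable (fun u => num u / Real.sqrt (1 - u ^ 2))
          (volume.restrict (Set.uIoc (0:ℝ) 1)) :=
        (hnumcont.measurable.div cont_sqrt_one_sub_sq.measurable).aestronglyMeasurable.restrict
      apply IntervalIntegrable.mono_fun' (g := fun u => C * (1 / Real.sqrt (1 - u ^ 2)))
        (sqrt_integrand_intable.const_mul C) hmeas
      · rw [uIoc_of_le (by norm_num : (0:ℝ) ≤ 1)]
        filter_upwards [ae_restrict_mem measurableSet_Ioc] with u hu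
        have hu01 : u ∈ Icc (0:ℝ) 1 := ⟨hu.1.le, hu.2⟩
        have hsq : 0 ≤ Real.sqrt (1 - u ^ 2) := Real.sqrt_nonneg _
        rw [Real.norm_eq_abs, abs_div, abs_of_nonneg hsq]
        rcases eq_or_lt_of_le hsq with heq | hpos
        · rw [← heq]
          simp
        · rw [div_le_iff₀ hpos, mul_assoc, one_div, inv_mul_cancel₀ hpos.ne', mul_one]
          exact (hC u hu01)
    have hf1 : IntervalIntegrable (fun u => num u / Real.sqrt (1 - u ^ 2)) volume 0 (1/2) := by
      apply hf_int.mono_set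
      rw [uIcc_of_le (by norm_num : (0:ℝ) ≤ 1/2), uIcc_of_le (by norm_num : (0:ℝ) ≤ 1)]
      exact Icc_subset_Icc le_rfl (by norm_num)
    have hf2 : IntervalIntegrable (fun u => num u / Real.sqrt (1 - u ^ 2)) volume (1/2) 1 := by
      apply hf_int.mono_set
      rw [uIcc_of_le (by norm_num : (1/2:ℝ) ≤ 1), uIcc_of_le (by norm_num : (0:ℝ) ≤ 1)]
      exact Icc_subset_Icc (by norm_num) le_rfl
    rw [← integral_add_adjacent_intervals hf1 hf2]
    have hlow1 : (θ * F 0 + s) * κ₀ ≤ ∫ u in (0:ℝ)..(1/2:ℝ), num u / Real.sqrt (1 - u ^ 2) := by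
      rw [hκ₀, ← intervalIntegral.integral_const_mul]
      apply integral_mono_on (by norm_num) (hsub1.const_mul _) hf1
      intro u hu
      have hy0 : (0:ℝ) ≤ u * θ * b / 2 :=
        div_nonneg (mul_nonneg (mul_nonneg hu.1 hθ.le) hb) (by norm_num)
      have hFle : F 0 ≤ F (u * θ * b / 2) := F_mono hθ le_rfl hy0
      have hle : θ * F 0 + s ≤ num u := by
        rw [hnum]
        have := mul_le_mul_of_nonneg_left hFle hθ.le
        linarith
      have hsqpos : 0 < Real.sqrt (1 - u ^ 2) := by
        have h9 : 0 < 1 - u ^ 2 := by nlinarith [hu.1, hu.2]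
        positivity
      rw [mul_one_div]
      exact (div_le_div_iff_of_pos_right hsqpos).mpr hle
    have hlow2 : (θ * F (θ * b / 4) + s) * κ ≤
        ∫ u in (1/2:ℝ)..1, num u / Real.sqrt (1 - u ^ 2) := by
      rw [hκ, ← intervalIntegral.integral_const_mul]
      apply integral_mono_on (by norm_num) (hsub2.const_mul _) hf2
      intro u hu
      rcases eq_or_lt_of_le hu.2 with rfl | hu1
      · norm_num
      · have hy0 : (0:ℝ) ≤ θ * b / 4 := by positivity
        have hyle : θ * b / 4 ≤ u * θ * b / 2 := by nlinarith [hu.1, hθ.le, hb, mul_nonneg hθ.le hb]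
        have hFle : F (θ * b / 4) ≤ F (u * θ * b / 2) := F_mono hθ hy0 hyle
        have hle : θ * F (θ * b / 4) + s ≤ num u := by
          rw [hnum]
          have := mul_le_mul_of_nonneg_left hFle hθ.le
          linarith
        have hsqpos : 0 < Real.sqrt (1 - u ^ 2) := by
          have h9 : 0 < 1 - u ^ 2 := by nlinarith [hu.1, hu1]
          positivity
        rw [mul_one_div]
        exact (div_le_div_iff_of_pos_right hsqpos).mpr hle
    exact add_le_add hlow1 hlow2
  -- conclude
  have hG : Tendsto (fun b : ℝ => (θ * F 0 + s) * κ₀ + (θ * F (θ * b / 4) + s) * κ)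
      atTop atTop := by
    have h1 : Tendsto (fun b : ℝ => θ * b / 4) atTop atTop :=
      (tendsto_id.const_mul_atTop hθ).atTop_div_const (by norm_num)
    have h2 : Tendsto (fun b : ℝ => F (θ * b / 4)) atTop atTop :=
      (F_tendsto_atTop hθ).comp h1
    have h3 : Tendsto (fun b : ℝ => θ * F (θ * b / 4) + s) atTop atTop :=
      tendsto_atTop_add_const_right _ s (h2.const_mul_atTop hθ)
    exact tendsto_atTop_add_const_left _ _ (h3.atTop_mul_const hκpos)
  apply tendsto_atTop_mono' atTop _ hG
  filter_upwards [eventually_ge_atTop (0:ℝ)] with b hb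
  exact key b hb
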